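/- For all integers n ≥ 0 and 0 ≤ m ≤ n, the number of noncrossing contractions with exactly m edges of the word (a a†)^n equals the number of 2-Motzkin paths of length n in which the total number of up steps U plus black level steps L equals m. -/

import Mathlib

/-- Two edges `(i,j)` and `(p,q)` cross if `i < p < j < q` or `p < i < q < j`. -/
def Crosses {N : ℕ} (e f : Fin N × Fin N) : Prop :=
  (e.1 < f.1 ∧ f.1 < e.2 ∧ e.2 < f.2) ∨ (f.1 < e.1 ∧ e.1 < f.2 ∧ f.2 < e.2)

/-- A contraction of the word `w`: a set of edges `(i,j)` with `i < j`, `w i = false` (an `a`),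
`w j = true` (an `a†`), whose endpoints are pairwise distinct. -/
def IsContraction {N : ℕ} (w : Fin N → Bool) (E : Finset (Fin N × Fin N)) : Prop :=
  (∀ e ∈ E, e.1 < e.2 ∧ w e.1 = false ∧ w e.2 = true) ∧
  (∀ e ∈ E, ∀ f ∈ E, e ≠ f → e.1 ≠ f.1 ∧ e.1 ≠ f.2 ∧ e.2 ≠ f.1 ∧ e.2 ≠ f.2)

/-- A set of edges is noncrossing if no two of its edges cross. -/
def IsNoncrossing {N : ℕ} (E : Finset (Fin N × Fin N)) : Prop :=
  ∀ e ∈ E, ∀ f ∈ E, ¬ Crosses e f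

/-- The number of noncrossing contractions of `w` with exactly `m` edges. -/
noncomputable def ncCount {N : ℕ} (w : Fin N → Bool) (m : ℕ) : ℕ :=
  Nat.card {E : Finset (Fin N × Fin N) //
    IsContraction w E ∧ IsNoncrossing E ∧ E.card = m}

/-- The word `(a^r a†)^n`, of length `(r+1)n`: `n` blocks, each consisting of `r` copies of `a`
(`false`) followed by one `a†` (`true`). -/
def wordRA (r n : ℕ) : Fin ((r + 1) * n) → Bool := fun i => decide (i.val % (r + 1) = r)

/-- Steps of a 2-Motzkin path: up, down, black level, gray level. -/
inductive MStep : Type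
  | U : MStep
  | D : MStep
  | Lb : MStep
  | Lg : MStep
deriving DecidableEq

/-- Height change of a step: `U` is `+1`, `D` is `-1`, level steps are `0`. -/
def MStep.h : MStep → ℤ
  | .U => 1
  | .D => -1
  | .Lb => 0
  | .Lg => 0

/-- A 2-Motzkin path: every partial height is nonnegative and the final height is `0`. -/
def IsMotzkin2 (p : List MStep) : Prop :=
  (∀ q : List MStep, q <+: p → 0 ≤ (q.map MStep.h).sum) ∧ (p.map MStep.h).sum = 0


open Classical Finset

noncomputable section
namespace NC


def stp (p : List MStep) (k : ℕ) : MStep := p.getD k .Lg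

def hgt (p : List MStep) (k : ℕ) : ℤ := ((p.take k).map MStep.h).sum

lemma hgt_succ (p : List MStep) (k : ℕ) (hk : k < p.length) :
    hgt p (k+1) = hgt p k + (stp p k).h := by
  unfold hgt stp
  rw [List.map_take, List.map_take, List.sum_take_succ (L := p.map MStep.h) (i := k) (by simpa using hk)]
  simp [List.getD, List.getElem?_eq_getElem hk]

lemma h_le_one (s : MStep) : s.h ≤ 1 := by cases s <;> simp [MStep.h]
lemma neg_one_le_h (s : MStep) : -1 ≤ s.h := by cases s <;> simp [MStep.h]

lemma hgt_nonneg {p : List MStep} (hp : IsMotzkin2 p) (k : ℕ) : 0 ≤ hgt p k :=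
  hp.1 _ (List.take_prefix _ _)

lemma hgt_final {p : List MStep} (hp : IsMotzkin2 p) : hgt p p.length = 0 := by
  unfold hgt; rw [List.take_length]; exact hp.2

lemma hgt_stable (p : List MStep) {k : ℕ} (hk : p.length ≤ k) : hgt p k = hgt p p.length := by
  unfold hgt; rw [List.take_length, List.take_of_length_le hk]

lemma hgt_succ_le (p : List MStep) (k : ℕ) : hgt p (k+1) ≤ hgt p k + 1 := by
  rcases lt_or_ge k p.length with hk | hk
  · rw [hgt_succ p k hk]; have := h_le_one (stp p k); omega
  · rw [hgt_stable p hk, hgt_stable p (by omega : p.length ≤ k + 1)]; omega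

lemma le_hgt_succ (p : List MStep) (k : ℕ) : hgt p k - 1 ≤ hgt p (k+1) := by
  rcases lt_or_ge k p.length with hk | hk
  · rw [hgt_succ p k hk]; have := neg_one_le_h (stp p k); omega
  · rw [hgt_stable p hk, hgt_stable p (by omega : p.length ≤ k + 1)]; omega

def isMatch (p : List MStep) (i j : ℕ) : Prop :=
  i < j ∧ j < p.length ∧ hgt p (j+1) = hgt p i ∧ ∀ k, i < k → k ≤ j → hgt p i < hgt p k

variable {n : ℕ}

def blkW (i : Fin n) : Fin ((1+1)*n) := ⟨2*i.1, by omega⟩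
def blkB (i : Fin n) : Fin ((1+1)*n) := ⟨2*i.1+1, by omega⟩

def stepOf (E : Finset (Fin ((1+1)*n) × Fin ((1+1)*n))) (i : Fin n) : MStep :=
  if (blkW i, blkB i) ∈ E then .Lb
  else if ∃ e ∈ E, e.1 = blkW i then .U
  else if ∃ e ∈ E, e.2 = blkB i then .D
  else .Lg

def steps (E : Finset (Fin ((1+1)*n) × Fin ((1+1)*n))) : List MStep :=
  (List.finRange n).map (stepOf E)

def spanSet (E : Finset (Fin ((1+1)*n) × Fin ((1+1)*n))) (k : ℕ) :
    Finset (Fin ((1+1)*n) × Fin ((1+1)*n)) :=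
  E.filter (fun e => e.1.1 / 2 < k ∧ k ≤ e.2.1 / 2)

def pathE (n : ℕ) (p : List MStep) : Finset (Fin ((1+1)*n) × Fin ((1+1)*n)) :=
  Finset.univ.filter (fun e =>
    (e.1.1 % 2 = 0 ∧ e.2.1 % 2 = 1 ∧ isMatch p (e.1.1/2) (e.2.1/2)) ∨
    (e.1.1 % 2 = 0 ∧ e.2.1 = e.1.1 + 1 ∧ stp p (e.1.1/2) = .Lb))


variable {p : List MStep}

lemma isMatch_stp_U {i j : ℕ} (h : isMatch p i j) : stp p i = .U := by
  obtain ⟨hij, hjl, heq, hmid⟩ := h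
  have h1 : hgt p i < hgt p (i+1) := hmid (i+1) (Nat.lt_succ_self i) (by omega)
  have e := hgt_succ p i (by omega)
  cases hs : stp p i
  · rfl
  all_goals (rw [hs] at e; simp [MStep.h] at e; omega)

lemma isMatch_stp_D {i j : ℕ} (h : isMatch p i j) : stp p j = .D := by
  obtain ⟨hij, hjl, heq, hmid⟩ := h
  have h1 : hgt p i < hgt p j := hmid j hij le_rfl
  have e := hgt_succ p j hjl
  cases hs : stp p j
  case D => rfl
  all_goals (rw [hs] at e; simp [MStep.h] at e; omega)

lemma isMatch_right_unique {i j j' : ℕ} (h : isMatch p i j) (h' : isMatch p i j') : j = j' := by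
  by_contra hne
  rcases Nat.lt_or_ge j j' with hlt | hge
  · have h1 := h'.2.2.2 (j+1) (by have := h.1; omega) (by omega)
    have h2 := h.2.2.1
    omega
  · have hlt : j' < j := by omega
    have h1 := h.2.2.2 (j'+1) (by have := h'.1; omega) (by omega)
    have h2 := h'.2.2.1
    omega

lemma isMatch_left_unique {i i' j : ℕ} (h : isMatch p i j) (h' : isMatch p i' j) : i = i' := by
  by_contra hne
  rcases Nat.lt_or_ge i i' with hlt | hge
  · have h1 := h.2.2.2 i' hlt (by have := h'.1; omega)
    have h2 := h.2.2.1
    have h3 := h'.2.2.1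
    omega
  · have h1 := h'.2.2.2 i (by omega) (by have := h.1; omega)
    have h2 := h.2.2.1
    have h3 := h'.2.2.1
    omega

lemma exists_match_U (hp : IsMotzkin2 p) {i : ℕ} (hi : i < p.length) (hU : stp p i = .U) :
    ∃ j, isMatch p i j := by
  have hstep : hgt p (i+1) = hgt p i + 1 := by rw [hgt_succ p i hi, hU]; rfl
  have hex : ∃ k, i < k ∧ hgt p k ≤ hgt p i := by
    refine ⟨p.length, hi, ?_⟩
    rw [hgt_final hp]; exact hgt_nonneg hp i
  obtain ⟨hm1, hm3⟩ := Nat.find_spec hex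
  set mm := Nat.find hex with hmm
  have hmin : ∀ k, i < k → k < mm → hgt p i < hgt p k := by
    intro k hk1 hk2
    by_contra hle
    exact Nat.find_min hex hk2 ⟨hk1, by omega⟩
  have hmne : mm ≠ i + 1 := by
    intro hcon; rw [hcon] at hm3; omega
  have hmge : i + 2 ≤ mm := by omega
  have hmle : mm ≤ p.length := by
    by_contra hcon
    push_neg at hcon
    have h4 := hmin p.length hi hcon
    rw [hgt_final hp] at h4
    have h0 : 0 ≤ hgt p i := hgt_nonneg hp i
    omega
  refine ⟨mm - 1, by omega, by omega, ?_, ?_⟩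
  · have h1 : hgt p i < hgt p (mm - 1) := hmin (mm - 1) (by omega) (by omega)
    have h2 := le_hgt_succ p (mm - 1)
    rw [(by omega : mm - 1 + 1 = mm)] at h2
    rw [(by omega : mm - 1 + 1 = mm)]
    omega
  · intro k hk1 hk2
    exact hmin k hk1 (by omega)

lemma exists_match_D (hp : IsMotzkin2 p) {j : ℕ} (hj : j < p.length) (hD : stp p j = .D) :
    ∃ i, isMatch p i j := by
  have hstep : hgt p (j+1) = hgt p j - 1 := by rw [hgt_succ p j hj, hD]; rfl
  classical
  set P : ℕ → Prop := fun k => hgt p k ≤ hgt p (j+1) with hP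
  have hP0 : P 0 := by
    show hgt p 0 ≤ hgt p (j+1)
    have h0 : hgt p 0 = 0 := rfl
    have := hgt_nonneg hp (j+1)
    omega
  set i := Nat.findGreatest P j with hi
  have hPi : hgt p i ≤ hgt p (j+1) := Nat.findGreatest_spec (Nat.zero_le j) hP0
  have higr : ∀ k, i < k → k ≤ j → hgt p (j+1) < hgt p k := by
    intro k hk1 hk2
    by_contra hc
    push_neg at hc
    exact Nat.findGreatest_is_greatest hk1 hk2 hc
  have hile : i ≤ j := Nat.findGreatest_le j
  have hinej : i ≠ j := by
    intro hcon
    rw [hcon] at hPi; omega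
  have h1 : hgt p (j+1) < hgt p (i+1) := higr (i+1) (Nat.lt_succ_self i) (by omega)
  have h2 := hgt_succ_le p i
  refine ⟨i, by omega, hj, by omega, ?_⟩
  intro k hk1 hk2
  have := higr k hk1 hk2
  omega


variable {n : ℕ} {E : Finset (Fin ((1+1)*n) × Fin ((1+1)*n))}

lemma mem_facts (hC : IsContraction (wordRA 1 n) E) {e} (he : e ∈ E) :
    e.1.1 % 2 = 0 ∧ e.2.1 % 2 = 1 ∧ e.1.1 < e.2.1 := by
  obtain ⟨h1, h2, h3⟩ := hC.1 e he
  simp [wordRA] at h2 h3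
  refine ⟨by omega, by omega, h1⟩

lemma eq_of_fst (hC : IsContraction (wordRA 1 n) E) {e f} (he : e ∈ E) (hf : f ∈ E)
    (h : e.1 = f.1) : e = f := by
  by_contra hne
  exact (hC.2 e he f hf hne).1 h

lemma eq_of_snd (hC : IsContraction (wordRA 1 n) E) {e f} (he : e ∈ E) (hf : f ∈ E)
    (h : e.2 = f.2) : e = f := by
  by_contra hne
  exact (hC.2 e he f hf hne).2.2.2 h

lemma length_steps (E : Finset (Fin ((1+1)*n) × Fin ((1+1)*n))) : (steps E).length = n := by
  simp [steps]

lemma stp_steps (E : Finset (Fin ((1+1)*n) × Fin ((1+1)*n))) {k : ℕ} (hk : k < n) :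
    stp (steps E) k = stepOf E ⟨k, hk⟩ := by
  unfold stp steps
  rw [List.getD_eq_getElem _ _ (by simpa using hk)]
  simp

lemma spanSet_final : spanSet E n = ∅ := by
  ext e
  simp only [spanSet, Finset.mem_filter, Finset.notMem_empty, iff_false]
  rintro ⟨he, h1, h2⟩
  have := e.2.isLt
  omega

lemma hgt_steps (hC : IsContraction (wordRA 1 n) E) (hN : IsNoncrossing E) :
    ∀ k, k ≤ n → hgt (steps E) k = ((spanSet E k).card : ℤ) := by
  intro k
  induction k with
  | zero =>
    intro _
    have : spanSet E 0 = ∅ := by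
      ext e; simp [spanSet]
    simp [hgt, this]
  | succ k ih =>
    intro hk1
    have hk : k < n := by omega
    rw [hgt_succ (steps E) k (by rw [length_steps]; omega), ih (by omega), stp_steps E hk]
    unfold stepOf
    split_ifs with hLb hU hD
    · -- Lb case
      have hset : spanSet E (k+1) = spanSet E k := by
        ext e
        simp only [spanSet, Finset.mem_filter]
        constructor
        · rintro ⟨he, h1, h2⟩
          refine ⟨he, ?_, by omega⟩
          rcases Nat.lt_or_ge (e.1.1/2) k with h | h
          · exact h
          · exfalso
            obtain ⟨p1, p2, p3⟩ := mem_facts hC he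
            have he1 : e.1.1 = 2*k := by omega
            have heq : e = (blkW ⟨k,hk⟩, blkB ⟨k,hk⟩) :=
              eq_of_fst hC he hLb (Fin.ext (by simpa [blkW] using he1))
            rw [heq] at h2
            simp only [blkB] at h2
            omega
        · rintro ⟨he, h1, h2⟩
          refine ⟨he, by omega, ?_⟩
          rcases Nat.lt_or_ge k (e.2.1/2) with h | h
          · omega
          · exfalso
            obtain ⟨p1, p2, p3⟩ := mem_facts hC he
            have he2 : e.2.1 = 2*k+1 := by omega
            have heq : e = (blkW ⟨k,hk⟩, blkB ⟨k,hk⟩) :=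
              eq_of_snd hC he hLb (Fin.ext (by simpa [blkB] using he2))
            rw [heq] at h1
            simp only [blkW] at h1
            omega
      rw [hset]
      simp [MStep.h]
    · -- U case
      obtain ⟨e0, he0, he0f⟩ := hU
      have he01 : e0.1.1 = 2*k := by rw [he0f]; rfl
      obtain ⟨q1, q2, q3⟩ := mem_facts hC he0
      have he02 : e0.2.1 ≠ 2*k+1 := by
        intro hcon
        have : e0 = (blkW ⟨k,hk⟩, blkB ⟨k,hk⟩) := Prod.ext he0f (Fin.ext hcon)
        rw [this] at he0
        exact hLb he0
      have he02' : 2*k+3 ≤ e0.2.1 := by omega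
      have noBlack : ∀ f ∈ E, f.2.1 ≠ 2*k+1 := by
        intro f hf hfb
        have hne : f ≠ e0 := by
          intro hcon; rw [hcon] at hfb; omega
        obtain ⟨r1, r2, r3⟩ := mem_facts hC hf
        have hf1 : f.1 ≠ e0.1 := (hC.2 f hf e0 he0 hne).1
        have hf1v : f.1.1 ≠ 2*k := by
          intro hcon
          exact hf1 (Fin.ext (by omega))
        have hf1lt : f.1.1 < 2*k := by omega
        exact hN f hf e0 he0 (Or.inl ⟨Fin.lt_def.mpr (by omega),
          Fin.lt_def.mpr (by omega), Fin.lt_def.mpr (by omega)⟩)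
      have he0not : e0 ∉ spanSet E k := by
        simp only [spanSet, Finset.mem_filter]
        rintro ⟨-, h1, -⟩
        omega
      have hset : spanSet E (k+1) = insert e0 (spanSet E k) := by
        ext e
        simp only [spanSet, Finset.mem_filter, Finset.mem_insert]
        constructor
        · rintro ⟨he, h1, h2⟩
          obtain ⟨p1, p2, p3⟩ := mem_facts hC he
          rcases Nat.lt_or_ge (e.1.1/2) k with h | h
          · exact Or.inr ⟨he, h, by omega⟩
          · left
            have : e.1.1 = 2*k := by omega
            exact eq_of_fst hC he he0 (Fin.ext (by omega))
        · rintro (rfl | ⟨he, h1, h2⟩)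
          · exact ⟨he0, by omega, by omega⟩
          · obtain ⟨p1, p2, p3⟩ := mem_facts hC he
            have : e.2.1 ≠ 2*k+1 := noBlack e he
            refine ⟨he, by omega, by omega⟩
      rw [hset, Finset.card_insert_of_notMem he0not]
      simp [MStep.h]
    · -- D case
      obtain ⟨f0, hf0, hf0b⟩ := hD
      have hf02 : f0.2.1 = 2*k+1 := by rw [hf0b]; rfl
      obtain ⟨q1, q2, q3⟩ := mem_facts hC hf0
      have noWhite : ∀ e ∈ E, e.1.1 ≠ 2*k := by
        intro e he hcon
        exact hU ⟨e, he, Fin.ext (by simpa [blkW] using hcon)⟩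
      have hf01 : f0.1.1 < 2*k := by
        have := noWhite f0 hf0
        omega
      have hf0mem : f0 ∈ spanSet E k := by
        simp only [spanSet, Finset.mem_filter]
        exact ⟨hf0, by omega, by omega⟩
      have hset : spanSet E (k+1) = (spanSet E k).erase f0 := by
        ext e
        simp only [spanSet, Finset.mem_filter, Finset.mem_erase]
        constructor
        · rintro ⟨he, h1, h2⟩
          obtain ⟨p1, p2, p3⟩ := mem_facts hC he
          have := noWhite e he
          refine ⟨?_, he, by omega, by omega⟩
          intro hcon
          rw [hcon] at h2
          omega
        · rintro ⟨hne, he, h1, h2⟩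
          obtain ⟨p1, p2, p3⟩ := mem_facts hC he
          refine ⟨he, by omega, ?_⟩
          rcases Nat.lt_or_ge k (e.2.1/2) with h | h
          · omega
          · exfalso
            have : e.2.1 = 2*k+1 := by omega
            exact hne (eq_of_snd hC he hf0 (Fin.ext (by omega)))
      have hpos : 1 ≤ (spanSet E k).card := Finset.card_pos.mpr ⟨f0, hf0mem⟩
      rw [hset, Finset.card_erase_of_mem hf0mem, Nat.cast_sub hpos]
      simp [MStep.h]
      ring
    · -- Lg case
      have noWhite : ∀ e ∈ E, e.1.1 ≠ 2*k := by
        intro e he hcon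
        exact hU ⟨e, he, Fin.ext (by simpa [blkW] using hcon)⟩
      have noBlack : ∀ e ∈ E, e.2.1 ≠ 2*k+1 := by
        intro e he hcon
        exact hD ⟨e, he, Fin.ext (by simpa [blkB] using hcon)⟩
      have hset : spanSet E (k+1) = spanSet E k := by
        ext e
        simp only [spanSet, Finset.mem_filter]
        constructor
        · rintro ⟨he, h1, h2⟩
          obtain ⟨p1, p2, p3⟩ := mem_facts hC he
          have := noWhite e he
          refine ⟨he, by omega, by omega⟩
        · rintro ⟨he, h1, h2⟩
          obtain ⟨p1, p2, p3⟩ := mem_facts hC he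
          have := noBlack e he
          refine ⟨he, by omega, by omega⟩
      rw [hset]
      simp [MStep.h]

lemma steps_motzkin (hC : IsContraction (wordRA 1 n) E) (hN : IsNoncrossing E) :
    IsMotzkin2 (steps E) := by
  constructor
  · intro q hq
    have hql : q.length ≤ n := by
      have := hq.length_le
      rw [length_steps] at this
      exact this
    have hqe : q = (steps E).take q.length := List.prefix_iff_eq_take.mp hq
    have : (q.map MStep.h).sum = hgt (steps E) q.length := by
      conv_lhs => rw [hqe]
      rfl
    rw [this, hgt_steps hC hN _ hql]
    exact Nat.cast_nonneg _
  · have h := hgt_steps hC hN n le_rfl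
    rw [spanSet_final] at h
    have : (steps E).map MStep.h = ((steps E).take n).map MStep.h := by
      rw [List.take_of_length_le (by rw [length_steps])]
    rw [this]
    simpa [hgt] using h

variable {p : List MStep}

lemma mem_pathE {e : Fin ((1+1)*n) × Fin ((1+1)*n)} :
    e ∈ pathE n p ↔
      (e.1.1 % 2 = 0 ∧ e.2.1 % 2 = 1 ∧ isMatch p (e.1.1/2) (e.2.1/2)) ∨
      (e.1.1 % 2 = 0 ∧ e.2.1 = e.1.1 + 1 ∧ stp p (e.1.1/2) = .Lb) := by
  simp [pathE]

lemma pathE_fst_even {e} (he : e ∈ pathE n p) : e.1.1 % 2 = 0 := by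
  rw [mem_pathE] at he
  rcases he with ⟨h, -, -⟩ | ⟨h, -, -⟩ <;> exact h

lemma pathE_snd_odd {e} (he : e ∈ pathE n p) : e.2.1 % 2 = 1 := by
  rw [mem_pathE] at he
  rcases he with ⟨-, h, -⟩ | ⟨h1, h2, -⟩
  · exact h
  · omega

lemma pathE_lt {e} (he : e ∈ pathE n p) : e.1.1 < e.2.1 := by
  rw [mem_pathE] at he
  rcases he with ⟨h1, h2, h3, -⟩ | ⟨h1, h2, -⟩
  · omega
  · omega

lemma pathE_eq_of_fst {e f} (he : e ∈ pathE n p) (hf : f ∈ pathE n p) (h : e.1 = f.1) :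
    e = f := by
  have hv : e.1.1 = f.1.1 := by rw [h]
  rw [mem_pathE] at he hf
  rcases he with ⟨he1, he2, he3⟩ | ⟨he1, he2, he3⟩ <;>
    rcases hf with ⟨hf1, hf2, hf3⟩ | ⟨hf1, hf2, hf3⟩
  · rw [hv] at he3
    have hj := isMatch_right_unique he3 hf3
    exact Prod.ext h (Fin.ext (by omega))
  · rw [hv] at he3
    have := isMatch_stp_U he3
    rw [this] at hf3
    simp at hf3
  · rw [← hv] at hf3
    have := isMatch_stp_U hf3
    rw [this] at he3
    simp at he3
  · exact Prod.ext h (Fin.ext (by omega))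

lemma pathE_eq_of_snd {e f} (he : e ∈ pathE n p) (hf : f ∈ pathE n p) (h : e.2 = f.2) :
    e = f := by
  have hv : e.2.1 = f.2.1 := by rw [h]
  rw [mem_pathE] at he hf
  rcases he with ⟨he1, he2, he3⟩ | ⟨he1, he2, he3⟩ <;>
    rcases hf with ⟨hf1, hf2, hf3⟩ | ⟨hf1, hf2, hf3⟩
  · rw [hv] at he3
    have hj := isMatch_left_unique he3 hf3
    exact Prod.ext (Fin.ext (by omega)) h
  · -- e cross, f Lb
    have hD := isMatch_stp_D he3
    have hdd : e.2.1/2 = f.1.1/2 := by omega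
    rw [hdd] at hD
    rw [hD] at hf3
    simp at hf3
  · have hD := isMatch_stp_D hf3
    have hdd : f.2.1/2 = e.1.1/2 := by omega
    rw [hdd] at hD
    rw [hD] at he3
    simp at he3
  · exact Prod.ext (Fin.ext (by omega)) h

lemma pathE_isContraction : IsContraction (wordRA 1 n) (pathE n p) := by
  constructor
  · intro e he
    have h1 := pathE_fst_even he
    have h2 := pathE_snd_odd he
    have h3 := pathE_lt he
    refine ⟨Fin.lt_def.mpr h3, ?_, ?_⟩ <;> simp [wordRA] <;> omega
  · intro e he f hf hne
    refine ⟨?_, ?_, ?_, ?_⟩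
    · exact fun h => hne (pathE_eq_of_fst he hf h)
    · intro h
      have h1 := pathE_fst_even he
      have h2 := pathE_snd_odd hf
      rw [h] at h1
      omega
    · intro h
      have h1 := pathE_snd_odd he
      have h2 := pathE_fst_even hf
      rw [h] at h1
      omega
    · exact fun h => hne (pathE_eq_of_snd he hf h)

lemma pathE_aux {e f} (he : e ∈ pathE n p) (hf : f ∈ pathE n p) :
    ¬(e.1 < f.1 ∧ f.1 < e.2 ∧ e.2 < f.2) := by
  rintro ⟨h1, h2, h3⟩
  rw [Fin.lt_def] at h1 h2 h3
  rw [mem_pathE] at he hf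
  rcases he with ⟨he1, he2, he3⟩ | ⟨he1, he2, he3⟩
  · rcases hf with ⟨hf1, hf2, hf3⟩ | ⟨hf1, hf2, hf3⟩
    · have hac : e.1.1/2 < f.1.1/2 := by omega
      have hcb : f.1.1/2 ≤ e.2.1/2 := by omega
      have hbd : e.2.1/2 < f.2.1/2 := by omega
      have t1 := he3.2.2.2 (f.1.1/2) hac hcb
      have t2 := hf3.2.2.2 (e.2.1/2 + 1) (by omega) (by omega)
      have t3 := he3.2.2.1
      omega
    · omega
  · omega

lemma pathE_noncrossing : IsNoncrossing (pathE n p) :=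
  fun e he f hf hcr => hcr.elim (pathE_aux he hf) (pathE_aux hf he)

lemma lbEdge_mem (i : Fin n) (h : stp p i.1 = .Lb) : (blkW i, blkB i) ∈ pathE n p := by
  rw [mem_pathE]
  right
  refine ⟨?_, ?_, ?_⟩
  · simp only [blkW]; omega
  · simp [blkW, blkB]
  · show stp p ((blkW i).1 / 2) = .Lb
    simp only [blkW]
    rw [(by omega : 2*i.1/2 = i.1)]
    exact h

lemma crossEdge_mem {i j : ℕ} (h : isMatch p i j) (hin : i < n) (hjn : j < n) :
    ((blkW ⟨i,hin⟩, blkB ⟨j,hjn⟩) : Fin ((1+1)*n) × Fin ((1+1)*n)) ∈ pathE n p := by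
  rw [mem_pathE]
  left
  refine ⟨by simp only [blkW]; omega, by simp only [blkB]; omega, ?_⟩
  show isMatch p ((blkW ⟨i,hin⟩).1 / 2) ((blkB ⟨j,hjn⟩).1 / 2)
  simp only [blkW, blkB]
  rw [(by omega : 2*i/2 = i), (by omega : (2*j+1)/2 = j)]
  exact h

lemma stepOf_pathE (hp : IsMotzkin2 p) (hl : p.length = n) (i : Fin n) :
    stepOf (pathE n p) i = stp p i.1 := by
  have hi : i.1 < p.length := by rw [hl]; exact i.isLt
  unfold stepOf
  split_ifs with h1 h2 h3
  · -- Lb edge present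
    rw [mem_pathE] at h1
    rcases h1 with ⟨-, -, h⟩ | ⟨-, -, h⟩
    · exfalso
      simp only [blkW, blkB] at h
      rw [(by omega : 2*i.1/2 = i.1), (by omega : (2*i.1+1)/2 = i.1)] at h
      exact absurd h.1 (lt_irrefl i.1)
    · simp only [blkW] at h
      rw [(by omega : 2*i.1/2 = i.1)] at h
      exact h.symm
  · -- white matched
    obtain ⟨e, he, hef⟩ := h2
    have hev : e.1.1 = 2*i.1 := by rw [hef]; rfl
    rw [mem_pathE] at he
    rcases he with ⟨he1, he2, he3⟩ | ⟨he1, he2, he3⟩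
    · rw [hev, (by omega : 2*i.1/2 = i.1)] at he3
      exact (isMatch_stp_U he3).symm
    · exfalso
      apply h1
      have : e = (blkW i, blkB i) := by
        refine Prod.ext hef (Fin.ext ?_)
        show e.2.1 = 2*i.1+1
        omega
      rw [← this]
      rw [mem_pathE]
      right
      exact ⟨he1, he2, he3⟩
  · -- black matched
    obtain ⟨e, he, hef⟩ := h3
    have hev : e.2.1 = 2*i.1+1 := by rw [hef]; rfl
    rw [mem_pathE] at he
    rcases he with ⟨he1, he2, he3⟩ | ⟨he1, he2, he3⟩
    · rw [hev, (by omega : (2*i.1+1)/2 = i.1)] at he3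
      exact (isMatch_stp_D he3).symm
    · exfalso
      apply h1
      have : e = (blkW i, blkB i) := by
        refine Prod.ext (Fin.ext ?_) hef
        show e.1.1 = 2*i.1
        omega
      rw [← this]
      rw [mem_pathE]
      right
      exact ⟨he1, he2, he3⟩
  · -- nothing
    cases hs : stp p i.1
    · exfalso
      obtain ⟨j, hj⟩ := exists_match_U hp hi hs
      have hjn : j < n := by have := hj.2.1; omega
      exact h2 ⟨(blkW i, blkB ⟨j, hjn⟩), crossEdge_mem (by simpa using hj) i.isLt hjn, rfl⟩
    · exfalso
      obtain ⟨i0, hi0⟩ := exists_match_D hp hi hs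
      have hi0n : i0 < n := by have := hi0.1; omega
      exact h3 ⟨(blkW ⟨i0, hi0n⟩, blkB i), crossEdge_mem (by simpa using hi0) hi0n i.isLt, rfl⟩
    · exact absurd (lbEdge_mem i hs) h1
    · rfl

lemma steps_pathE (hp : IsMotzkin2 p) (hl : p.length = n) : steps (pathE n p) = p := by
  apply List.ext_getElem
  · rw [length_steps, hl]
  intro i h1 h2
  rw [length_steps] at h1
  have hst : (steps (pathE n p))[i] = stepOf (pathE n p) ⟨i, h1⟩ := by
    simp [steps]
  rw [hst, stepOf_pathE hp hl]
  exact List.getD_eq_getElem _ _ h2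

lemma cross_isMatch (hC : IsContraction (wordRA 1 n) E) (hN : IsNoncrossing E)
    {e} (he : e ∈ E) (hne : e.2.1 ≠ e.1.1 + 1) :
    isMatch (steps E) (e.1.1/2) (e.2.1/2) := by
  obtain ⟨p1, p2, p3⟩ := mem_facts hC he
  have hij : e.1.1/2 < e.2.1/2 := by omega
  have hjn : e.2.1/2 < n := by have := e.2.isLt; omega
  refine ⟨hij, by rw [length_steps]; exact hjn, ?_, ?_⟩
  · rw [hgt_steps hC hN _ (by omega), hgt_steps hC hN _ (by omega)]
    congr 2
    ext f
    simp only [spanSet, Finset.mem_filter]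
    constructor
    · rintro ⟨hf, h1, h2⟩
      obtain ⟨q1, q2, q3⟩ := mem_facts hC hf
      refine ⟨hf, ?_, by omega⟩
      by_contra hge
      push_neg at hge
      rcases Nat.eq_or_lt_of_le hge with heq | hlt
      · have : f = e := (eq_of_fst hC hf he (Fin.ext (by omega))).symm ▸ rfl
        have hfe : f = e := eq_of_fst hC hf he (Fin.ext (by omega))
        rw [hfe] at h2
        omega
      · exact hN e he f hf (Or.inl ⟨Fin.lt_def.mpr (by omega),
          Fin.lt_def.mpr (by omega), Fin.lt_def.mpr (by omega)⟩)
    · rintro ⟨hf, h1, h2⟩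
      obtain ⟨q1, q2, q3⟩ := mem_facts hC hf
      refine ⟨hf, by omega, ?_⟩
      by_contra hlt2
      push_neg at hlt2
      rcases Nat.eq_or_lt_of_le (by omega : f.2.1/2 ≤ e.2.1/2) with heq | hlt
      · have hfe : f = e := eq_of_snd hC hf he (Fin.ext (by omega))
        rw [hfe] at h1
        omega
      · exact hN f hf e he (Or.inl ⟨Fin.lt_def.mpr (by omega),
          Fin.lt_def.mpr (by omega), Fin.lt_def.mpr (by omega)⟩)
  · intro k hk1 hk2
    rw [hgt_steps hC hN _ (by omega), hgt_steps hC hN _ (by omega)]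
    have hnotmem : e ∉ spanSet E (e.1.1/2) := by
      simp only [spanSet, Finset.mem_filter]
      rintro ⟨-, h, -⟩
      omega
    have hsub : insert e (spanSet E (e.1.1/2)) ⊆ spanSet E k := by
      intro f hf
      rcases Finset.mem_insert.mp hf with rfl | hf
      · simp only [spanSet, Finset.mem_filter]
        exact ⟨he, by omega, by omega⟩
      · simp only [spanSet, Finset.mem_filter] at hf ⊢
        obtain ⟨hfE, h1, h2⟩ := hf
        obtain ⟨q1, q2, q3⟩ := mem_facts hC hfE
        refine ⟨hfE, by omega, ?_⟩
        by_contra hlt2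
        push_neg at hlt2
        exact hN f hfE e he (Or.inl ⟨Fin.lt_def.mpr (by omega),
          Fin.lt_def.mpr (by omega), Fin.lt_def.mpr (by omega)⟩)
    have hle := Finset.card_le_card hsub
    rw [Finset.card_insert_of_notMem hnotmem] at hle
    omega

lemma pathE_steps (hC : IsContraction (wordRA 1 n) E) (hN : IsNoncrossing E) :
    pathE n (steps E) = E := by
  ext f
  constructor
  · intro hf
    rw [mem_pathE] at hf
    rcases hf with ⟨h1, h2, h3⟩ | ⟨h1, h2, h3⟩
    · have hin : f.1.1/2 < n := by have := f.1.isLt; omega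
      have hU : stepOf E ⟨f.1.1/2, hin⟩ = .U := by
        rw [← stp_steps E hin]
        exact isMatch_stp_U h3
      unfold stepOf at hU
      split_ifs at hU with g1 g2 g3
      · obtain ⟨e, he, hef⟩ := g2
        have hev : e.1.1 = 2*(f.1.1/2) := by rw [hef]; rfl
        have hne : e.2.1 ≠ e.1.1 + 1 := by
          intro hcon
          apply g1
          rw [show ((blkW ⟨f.1.1/2, hin⟩, blkB ⟨f.1.1/2, hin⟩) :
              Fin ((1+1)*n) × Fin ((1+1)*n)) = e from
            (Prod.ext hef (Fin.ext (by show e.2.1 = 2*(f.1.1/2)+1; omega))).symm]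
          exact he
        have hm := cross_isMatch hC hN he hne
        rw [hev, (by omega : 2*(f.1.1/2)/2 = f.1.1/2)] at hm
        have hjj := isMatch_right_unique h3 hm
        obtain ⟨q1, q2, q3⟩ := mem_facts hC he
        have hfe : f = e := Prod.ext (Fin.ext (by omega)) (Fin.ext (by omega))
        rw [hfe]
        exact he
    · have hin : f.1.1/2 < n := by have := f.1.isLt; omega
      rw [stp_steps E hin] at h3
      unfold stepOf at h3
      split_ifs at h3 with g1 g2 g3
      · have hfe : f = (blkW ⟨f.1.1/2, hin⟩, blkB ⟨f.1.1/2, hin⟩) :=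
          Prod.ext (Fin.ext (by show f.1.1 = 2*(f.1.1/2); omega))
            (Fin.ext (by show f.2.1 = 2*(f.1.1/2)+1; omega))
        rw [hfe]
        exact g1
      all_goals simp at h3
  · intro hf
    rw [mem_pathE]
    obtain ⟨p1, p2, p3⟩ := mem_facts hC hf
    rcases eq_or_ne f.2.1 (f.1.1+1) with hsame | hdiff
    · right
      refine ⟨p1, hsame, ?_⟩
      have hin : f.1.1/2 < n := by have := f.1.isLt; omega
      rw [stp_steps E hin]
      unfold stepOf
      have hfe : ((blkW ⟨f.1.1/2, hin⟩, blkB ⟨f.1.1/2, hin⟩) :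
          Fin ((1+1)*n) × Fin ((1+1)*n)) = f :=
        Prod.ext (Fin.ext (by show 2*(f.1.1/2) = f.1.1; omega))
          (Fin.ext (by show 2*(f.1.1/2)+1 = f.2.1; omega))
      rw [if_pos (show ((blkW ⟨f.1.1/2, hin⟩, blkB ⟨f.1.1/2, hin⟩) :
          Fin ((1+1)*n) × Fin ((1+1)*n)) ∈ E by rw [hfe]; exact hf)]
    · left
      exact ⟨p1, p2, cross_isMatch hC hN hf hdiff⟩

lemma count_eq_card_aux (q : List MStep) (x : MStep) :
    (Finset.univ.filter fun i : Fin q.length => q.get i = x).card = q.count x := by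
  induction q with
  | nil => simp
  | cons a t ih =>
    rw [List.count_cons, ← ih, Finset.card_filter, Finset.card_filter]
    simp only [List.length_cons]
    rw [Fin.sum_univ_succ]
    simp [add_comm]
    split_ifs <;> simp_all

lemma stp_get (q : List MStep) (i : Fin q.length) : stp q i.1 = q.get i := by
  simp [stp, List.getD_eq_getElem _ _ i.isLt]

lemma filter_or_card {q : List MStep} (hl : q.length = n) :
    (Finset.univ.filter fun i : Fin n => stp q i.1 = .U ∨ stp q i.1 = .Lb).card
      = q.count .U + q.count .Lb := by
  subst hl
  rw [Finset.filter_or, Finset.card_union_of_disjoint]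
  · have h1 : (Finset.univ.filter fun i : Fin q.length => stp q i.1 = MStep.U)
        = Finset.univ.filter (fun i => q.get i = MStep.U) :=
      Finset.filter_congr (fun i _ => by rw [stp_get])
    have h2 : (Finset.univ.filter fun i : Fin q.length => stp q i.1 = MStep.Lb)
        = Finset.univ.filter (fun i => q.get i = MStep.Lb) :=
      Finset.filter_congr (fun i _ => by rw [stp_get])
    rw [h1, h2, count_eq_card_aux, count_eq_card_aux]
  · rw [Finset.disjoint_left]
    intro i hi1 hi2
    simp only [Finset.mem_filter] at hi1 hi2
    rw [hi1.2] at hi2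
    simp at hi2

lemma card_pathE (hp : IsMotzkin2 p) (hl : p.length = n) :
    (pathE n p).card = p.count .U + p.count .Lb := by
  rw [← filter_or_card hl]
  apply Finset.card_bij (fun e _ => (⟨e.1.1/2, by have := e.1.isLt; omega⟩ : Fin n))
  · intro e he
    simp only [Finset.mem_filter, Finset.mem_univ, true_and]
    rw [mem_pathE] at he
    rcases he with ⟨h1, h2, h3⟩ | ⟨h1, h2, h3⟩
    · left
      exact isMatch_stp_U h3
    · right
      exact h3
  · intro e he f hf hef
    have hv : e.1.1/2 = f.1.1/2 := by
      have := congrArg Fin.val hef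
      simpa using this
    have h1 := pathE_fst_even he
    have h2 := pathE_fst_even hf
    exact pathE_eq_of_fst he hf (Fin.ext (by omega))
  · intro i hi
    simp only [Finset.mem_filter, Finset.mem_univ, true_and] at hi
    rcases hi with hU | hLb
    · have hil : i.1 < p.length := by rw [hl]; exact i.isLt
      obtain ⟨j, hj⟩ := exists_match_U hp hil hU
      have hjn : j < n := by have := hj.2.1; omega
      refine ⟨(blkW i, blkB ⟨j, hjn⟩), crossEdge_mem (by simpa using hj) i.isLt hjn, ?_⟩
      apply Fin.ext
      show (2*i.1)/2 = i.1
      omega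
    · refine ⟨(blkW i, blkB i), lbEdge_mem i hLb, ?_⟩
      apply Fin.ext
      show (2*i.1)/2 = i.1
      omega

theorem stmt14' (n m : ℕ) :
    ncCount (wordRA 1 n) m
      = Nat.card {q : List MStep // q.length = n ∧ IsMotzkin2 q ∧
          q.count MStep.U + q.count MStep.Lb = m} := by
  apply Nat.card_congr
  apply Equiv.symm
  refine Equiv.ofBijective
    (fun q => ⟨pathE n q.1, pathE_isContraction, pathE_noncrossing, ?_⟩) ⟨?_, ?_⟩
  · rw [card_pathE q.2.2.1 q.2.1]
    exact q.2.2.2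
  · rintro ⟨q1, hq1⟩ ⟨q2, hq2⟩ h
    simp only [Subtype.mk.injEq] at h ⊢
    have := congrArg steps h
    rwa [steps_pathE hq1.2.1 hq1.1, steps_pathE hq2.2.1 hq2.1] at this
  · rintro ⟨E, hC, hN, hcard⟩
    have hcnt : (steps E).count MStep.U + (steps E).count MStep.Lb = m := by
      have := card_pathE (steps_motzkin hC hN) (length_steps E)
      rw [pathE_steps hC hN] at this
      rw [← this, hcard]
    refine ⟨⟨steps E, length_steps E, steps_motzkin hC hN, hcnt⟩, ?_⟩
    simp only [Subtype.mk.injEq]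
    exact pathE_steps hC hN
end NC
end

theorem stmt14 (n m : ℕ) (hm : m ≤ n) :
    ncCount (wordRA 1 n) m
      = Nat.card {p : List MStep // p.length = n ∧ IsMotzkin2 p ∧
          p.count MStep.U + p.count MStep.Lb = m} :=
  NC.stmt14' n m
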